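/- In the group G = ℤ * ℤ² = ⟨a⟩ * ⟨b,c⟩ with its standard generating set {a,b,c}, for each j ≥ 1 the bi-infinite-word based geodesic ray β^j = b^j a a a a ⋯ (reading b^j then a^∞ from the identity in the Cayley graph) is a geodesic ray, and the geodesic ray α = a a a a ⋯ is 0-contracting (indeed its image is an isometrically embedded copy of [0,∞) in a tree-graded piece), while β^j is not D-contracting for any D < j/2 since the flat coset b-c-plane through b^j projects onto a segment of β^j of length j. -/

import Mathlib

open Set

namespace ZFreeZsq

/-- The single relator `[b,c] = b c b⁻¹ c⁻¹` presenting `ℤ * ℤ² = ⟨a⟩ * ⟨b,c | [b,c]⟩`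
on generators `a = 0`, `b = 1`, `c = 2`. -/
def rels : Set (FreeGroup (Fin 3)) :=
  {FreeGroup.of 1 * FreeGroup.of 2 * (FreeGroup.of 1)⁻¹ * (FreeGroup.of 2)⁻¹}

/-- The group `G = ℤ * ℤ²`. -/
abbrev G : Type := PresentedGroup rels

/-- The generator `a`. -/
def a : G := PresentedGroup.of 0

/-- The generator `b`. -/
def b : G := PresentedGroup.of 1

/-- The word metric on `G` with respect to the generating set `{a, b, c}`:
the least length of a word in the generators and their inverses representing `g⁻¹h`. -/
noncomputable def wdist (g h : G) : ℕ :=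
  sInf {n : ℕ | ∃ l : List (Fin 3 × Bool), l.length = n ∧
    g⁻¹ * h = (l.map fun p =>
      if p.2 then (PresentedGroup.of p.1 : G) else (PresentedGroup.of p.1 : G)⁻¹).prod}

/-- A (discrete) geodesic ray in the Cayley graph: `wdist (ρ m) (ρ n) = |m − n|`. -/
def IsGeodesicRayN (ρ : ℕ → G) : Prop :=
  ∀ m n : ℕ, wdist (ρ m) (ρ n) = Nat.dist m n

/-- The parameters of closest-point projections of `x` onto the ray `ρ`. -/
def projParams (ρ : ℕ → G) (x : G) : Set ℕ :=
  {k | ∀ m : ℕ, wdist x (ρ k) ≤ wdist x (ρ m)}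

/-- The ray `ρ` is `D`-contracting: every metric ball disjoint from the ray projects onto a
segment of the ray of length at most `2D`. -/
def IsContractingRay (D : ℝ) (ρ : ℕ → G) : Prop :=
  ∀ (x : G) (r : ℕ), (∀ k : ℕ, ¬ wdist x (ρ k) < r) →
    ∀ k ∈ {k : ℕ | ∃ y : G, wdist x y < r ∧ k ∈ projParams ρ y},
    ∀ l ∈ {k : ℕ | ∃ y : G, wdist x y < r ∧ k ∈ projParams ρ y},
      |(k : ℝ) - (l : ℝ)| ≤ 2 * D

/-- The ray `α = a a a a ⋯`. -/
def αray : ℕ → G := fun k => a ^ k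

/-- The ray `β^j = b^j a a a a ⋯`: first read `b^j`, then powers of `a`. -/
def βray (j : ℕ) : ℕ → G := fun k => if k ≤ j then b ^ k else b ^ j * a ^ (k - j)

/-! ### basics -/


def letterF : Fin 3 × Bool → G := fun p =>
  if p.2 then (PresentedGroup.of p.1 : G) else (PresentedGroup.of p.1 : G)⁻¹

def wprod (l : List (Fin 3 × Bool)) : G := (l.map letterF).prod

lemma wdist_eq (g h : G) :
    wdist g h = sInf {n : ℕ | ∃ l : List (Fin 3 × Bool), l.length = n ∧ g⁻¹ * h = wprod l} := rfl

@[simp] lemma wprod_nil : wprod [] = 1 := rfl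

@[simp] lemma wprod_cons (p : Fin 3 × Bool) (l : List (Fin 3 × Bool)) :
    wprod (p :: l) = letterF p * wprod l := by simp [wprod]

@[simp] lemma wprod_append (l₁ l₂ : List (Fin 3 × Bool)) :
    wprod (l₁ ++ l₂) = wprod l₁ * wprod l₂ := by simp [wprod]

def invWord (l : List (Fin 3 × Bool)) : List (Fin 3 × Bool) :=
  (l.map fun p => (p.1, !p.2)).reverse

@[simp] lemma invWord_length (l : List (Fin 3 × Bool)) : (invWord l).length = l.length := by
  simp [invWord]

lemma letterF_inv (p : Fin 3 × Bool) : (letterF p)⁻¹ = letterF (p.1, !p.2) := by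
  rcases p with ⟨i, _ | _⟩ <;> simp [letterF]

lemma wprod_invWord (l : List (Fin 3 × Bool)) : wprod (invWord l) = (wprod l)⁻¹ := by
  induction l with
  | nil => simp [invWord]
  | cons p l ih =>
      have : invWord (p :: l) = invWord l ++ [(p.1, !p.2)] := by simp [invWord]
      rw [this, wprod_append, ih, wprod_cons]
      simp [← letterF_inv, mul_comm]

def wordSub : Subgroup G where
  carrier := {g | ∃ l, wprod l = g}
  one_mem' := ⟨[], rfl⟩
  mul_mem' := by
    rintro x y ⟨l₁, rfl⟩ ⟨l₂, rfl⟩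
    exact ⟨l₁ ++ l₂, by simp⟩
  inv_mem' := by
    rintro x ⟨l, rfl⟩
    exact ⟨invWord l, wprod_invWord l⟩

lemma exists_word (g : G) : ∃ l, wprod l = g :=
  PresentedGroup.generated_by rels wordSub
    (fun j => ⟨[(j, true)], by simp [letterF]⟩) g

lemma wset_nonempty (g h : G) :
    {n : ℕ | ∃ l : List (Fin 3 × Bool), l.length = n ∧ g⁻¹ * h = wprod l}.Nonempty := by
  obtain ⟨l, hl⟩ := exists_word (g⁻¹ * h)
  exact ⟨l.length, l, rfl, hl.symm⟩

lemma wdist_le {g h : G} {l : List (Fin 3 × Bool)} (hw : g⁻¹ * h = wprod l) :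
    wdist g h ≤ l.length :=
  Nat.sInf_le ⟨l, rfl, hw⟩

lemma le_wdist {g h : G} {B : ℕ}
    (hb : ∀ l : List (Fin 3 × Bool), g⁻¹ * h = wprod l → B ≤ l.length) :
    B ≤ wdist g h :=
  le_csInf (wset_nonempty g h) (by rintro n ⟨l, rfl, hl⟩; exact hb l hl)

lemma exists_min_word (g h : G) :
    ∃ l : List (Fin 3 × Bool), l.length = wdist g h ∧ g⁻¹ * h = wprod l :=
  Nat.sInf_mem (wset_nonempty g h)

@[simp] lemma wdist_self (g : G) : wdist g g = 0 :=
  Nat.le_zero.mp (by simpa using wdist_le (g := g) (h := g) (l := []) (by simp))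

lemma wdist_symm (g h : G) : wdist g h = wdist h g := by
  have key : ∀ u v : G, wdist u v ≤ wdist v u := by
    intro u v
    obtain ⟨l, hlen, hl⟩ := exists_min_word v u
    have : u⁻¹ * v = wprod (invWord l) := by
      rw [wprod_invWord, ← hl]; group
    simpa [hlen] using wdist_le this
  exact le_antisymm (key g h) (key h g)

lemma wdist_triangle (g h k : G) : wdist g k ≤ wdist g h + wdist h k := by
  obtain ⟨l₁, hlen₁, hl₁⟩ := exists_min_word g h
  obtain ⟨l₂, hlen₂, hl₂⟩ := exists_min_word h k
  have : g⁻¹ * k = wprod (l₁ ++ l₂) := by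
    rw [wprod_append, ← hl₁, ← hl₂]; group
  simpa [hlen₁, hlen₂] using wdist_le this

lemma wdist_mul_left (u g h : G) : wdist (u * g) (u * h) = wdist g h := by
  have : (u * g)⁻¹ * (u * h) = g⁻¹ * h := by group
  rw [wdist_eq, wdist_eq, this]

lemma wprod_replicate (i : Fin 3) (bb : Bool) (n : ℕ) :
    wprod (List.replicate n (i, bb)) = (letterF (i, bb)) ^ n := by
  induction n with
  | zero => simp
  | succ n ih => rw [List.replicate_succ, wprod_cons, ih, pow_succ']

lemma wdist_one_zpow (i : Fin 3) (t : ℤ) :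
    wdist 1 ((PresentedGroup.of i : G) ^ t) ≤ t.natAbs := by
  rcases Int.natAbs_eq t with h | h
  · have h2 : (PresentedGroup.of i : G) ^ t = (PresentedGroup.of i : G) ^ t.natAbs := by
      conv_lhs => rw [h]
      rw [zpow_natCast]
    have : (1 : G)⁻¹ * (PresentedGroup.of i : G) ^ t
        = wprod (List.replicate t.natAbs (i, true)) := by
      rw [wprod_replicate, inv_one, one_mul, h2]
      simp [letterF]
    simpa using wdist_le this
  · have h2 : (PresentedGroup.of i : G) ^ t = ((PresentedGroup.of i : G)⁻¹) ^ t.natAbs := by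
      conv_lhs => rw [h]
      rw [zpow_neg, zpow_natCast, inv_pow]
    have : (1 : G)⁻¹ * (PresentedGroup.of i : G) ^ t
        = wprod (List.replicate t.natAbs (i, false)) := by
      rw [wprod_replicate, inv_one, one_mul, h2]
      simp [letterF]
    simpa using wdist_le this



/-! ### abelianized lower bounds -/

noncomputable def φ (v : Fin 3) : G →* Multiplicative ℤ :=
  PresentedGroup.toGroup (f := fun i => Multiplicative.ofAdd (if i = v then 1 else 0)) (by
    rintro r hr
    rw [rels, Set.mem_singleton_iff] at hr
    subst hr
    simp only [map_mul, map_inv, FreeGroup.lift_apply_of]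
    rw [mul_comm (Multiplicative.ofAdd (if (1:Fin 3) = v then 1 else 0))]
    group)

noncomputable def Aval (v : Fin 3) (g : G) : ℤ := Multiplicative.toAdd (φ v g)

lemma Aval_mul (v : Fin 3) (g h : G) : Aval v (g * h) = Aval v g + Aval v h := by
  simp [Aval, map_mul]

@[simp] lemma Aval_of (v i : Fin 3) :
    Aval v (PresentedGroup.of i : G) = if i = v then 1 else 0 := by
  simp [Aval, φ, PresentedGroup.toGroup.of]

@[simp] lemma Aval_one (v : Fin 3) : Aval v (1 : G) = 0 := by simp [Aval]

lemma Aval_zpow (v : Fin 3) (g : G) (t : ℤ) : Aval v (g ^ t) = t * Aval v g := by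
  simp [Aval, map_zpow]

lemma Aval_pow (v : Fin 3) (g : G) (n : ℕ) : Aval v (g ^ n) = n * Aval v g := by
  simp [Aval, map_pow]

@[simp] lemma Aval_inv (v : Fin 3) (g : G) : Aval v g⁻¹ = - Aval v g := by
  simp [Aval, map_inv]

lemma Aval_letter_sum (p : Fin 3 × Bool) :
    (Aval 0 (letterF p)).natAbs + (Aval 1 (letterF p)).natAbs + (Aval 2 (letterF p)).natAbs = 1 := by
  rcases p with ⟨i, bb⟩
  have hval : ∀ v : Fin 3, Aval v (letterF (i, bb)) = if i = v then (if bb then 1 else -1) else 0 := by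
    intro v
    cases bb
    · simp only [letterF, Bool.false_eq_true, if_false, Aval_inv, Aval_of]
      split <;> simp
    · simp [letterF]
  rw [hval 0, hval 1, hval 2]
  fin_cases i <;> cases bb <;> simp

lemma Aval_wprod_bound (l : List (Fin 3 × Bool)) :
    (Aval 0 (wprod l)).natAbs + (Aval 1 (wprod l)).natAbs + (Aval 2 (wprod l)).natAbs
      ≤ l.length := by
  induction l with
  | nil => simp
  | cons p l ih =>
      have h0 := Aval_letter_sum p
      have hv : ∀ v : Fin 3, (Aval v (wprod (p :: l))).natAbs
          ≤ (Aval v (letterF p)).natAbs + (Aval v (wprod l)).natAbs := by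
        intro v
        rw [wprod_cons, Aval_mul]
        exact Int.natAbs_add_le _ _
      have := hv 0
      have := hv 1
      have := hv 2
      simp only [List.length_cons]
      omega

lemma Aval_le_wdist (g h : G) :
    (Aval 0 (g⁻¹ * h)).natAbs + (Aval 1 (g⁻¹ * h)).natAbs + (Aval 2 (g⁻¹ * h)).natAbs
      ≤ wdist g h := by
  apply le_wdist
  intro l hl
  rw [hl]
  exact Aval_wprod_bound l

/-! ### geodesics -/

lemma wdist_zpow_a (s m : ℤ) : wdist (a ^ s) (a ^ m) = (m - s).natAbs := by
  apply le_antisymm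
  · calc wdist (a ^ s) (a ^ m) = wdist (a ^ s * 1) (a ^ s * a ^ (m - s)) := by
          rw [mul_one, ← zpow_add, show s + (m - s) = m by ring]
    _ = wdist 1 (a ^ (m - s)) := wdist_mul_left _ _ _
    _ ≤ _ := wdist_one_zpow 0 (m - s)
  · have key : Aval 0 ((a ^ s)⁻¹ * a ^ m) = m - s := by
      rw [← zpow_neg, ← zpow_add, Aval_zpow]
      simp [a]
      ring
    calc (m - s).natAbs = (Aval 0 ((a ^ s)⁻¹ * a ^ m)).natAbs := by rw [key]
    _ ≤ _ := by
        have := Aval_le_wdist (a ^ s) (a ^ m)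
        omega

lemma natdist_eq (m n : ℕ) : Nat.dist m n = ((n : ℤ) - (m : ℤ)).natAbs := by
  rw [Nat.dist]; omega


/-! ### more geodesic facts -/

def c : G := PresentedGroup.of 2

lemma bc_comm : Commute b c := by
  have hmem : (FreeGroup.of 1 * FreeGroup.of 2 * (FreeGroup.of 1)⁻¹ * (FreeGroup.of 2)⁻¹ :
      FreeGroup (Fin 3)) ∈ Subgroup.normalClosure rels :=
    Subgroup.subset_normalClosure (by rw [rels]; exact Set.mem_singleton _)
  have h1 : (PresentedGroup.mk rels (FreeGroup.of 1 * FreeGroup.of 2 * (FreeGroup.of 1)⁻¹ *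
      (FreeGroup.of 2)⁻¹) : G) = 1 := (QuotientGroup.eq_one_iff _).mpr hmem
  have h2 : b * c * b⁻¹ * c⁻¹ = (1 : G) := by
    simpa [map_mul, map_inv, b, c, PresentedGroup.of] using h1
  rw [mul_inv_eq_one] at h2
  rw [mul_inv_eq_iff_eq_mul] at h2
  exact h2

lemma wdist_one_mul_le (g h : G) : wdist 1 (g * h) ≤ wdist 1 g + wdist 1 h := by
  have h1 := wdist_triangle 1 g (g * h)
  have h2 := wdist_mul_left g 1 h
  rw [mul_one] at h2
  omega

lemma wdist_one_pow (i : Fin 3) (n : ℕ) :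
    wdist 1 ((PresentedGroup.of i : G) ^ n) ≤ n := by
  have := wdist_one_zpow i (n : ℤ)
  rwa [zpow_natCast, Int.natAbs_natCast] at this

lemma wdist_one_pow_inv (i : Fin 3) (n : ℕ) :
    wdist 1 (((PresentedGroup.of i : G) ^ n)⁻¹) ≤ n := by
  have := wdist_one_zpow i (-(n : ℤ))
  rwa [zpow_neg, zpow_natCast, Int.natAbs_neg, Int.natAbs_natCast] at this

lemma geodesic_alpha : IsGeodesicRayN αray := by
  intro m n
  rw [natdist_eq]
  simp only [αray]
  rw [← zpow_natCast a m, ← zpow_natCast a n]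
  exact wdist_zpow_a _ _

lemma wdist_beta_le (j m n : ℕ) (hmn : m ≤ n) :
    wdist (βray j m) (βray j n) = Nat.dist m n := by
  rw [natdist_eq]
  rcases le_or_gt n j with hn | hn
  · -- both b powers
    have hm : m ≤ j := le_trans hmn hn
    have hx : (βray j m)⁻¹ * βray j n = b ^ (n - m) := by
      simp only [βray, if_pos hm, if_pos hn]
      rw [show b ^ n = b ^ m * b ^ (n - m) by rw [← pow_add]; congr 1; omega]
      group
    apply le_antisymm
    · calc wdist (βray j m) (βray j n) ≤ n - m := by
            have h2 := wdist_one_pow 1 (n - m)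
            have h3 : wdist (βray j m) (βray j n) = wdist 1 (b ^ (n - m)) := by
              rw [wdist_eq, wdist_eq, hx, inv_one, one_mul]
            rw [show (b : G) ^ (n - m) = (PresentedGroup.of 1 : G) ^ (n - m) from rfl] at h3
            omega
      _ = _ := by omega
    · have hA : Aval 1 ((βray j m)⁻¹ * βray j n) = ((n : ℤ) - m) := by
        rw [hx, Aval_pow]
        simp [b]
        omega
      have := Aval_le_wdist (βray j m) (βray j n)
      rw [hA] at this
      omega
  · rcases le_or_gt m j with hm | hm
    · -- m ≤ j < n
      have hx : (βray j m)⁻¹ * βray j n = b ^ (j - m) * a ^ (n - j) := by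
        simp only [βray, if_pos hm, if_neg (by omega : ¬ n ≤ j)]
        rw [show b ^ j = b ^ m * b ^ (j - m) by rw [← pow_add]; congr 1; omega]
        group
    
      apply le_antisymm
      · have h1 : wdist (βray j m) (βray j n) = wdist 1 (b ^ (j - m) * a ^ (n - j)) := by
          rw [wdist_eq, wdist_eq, hx, inv_one, one_mul]
        have h2 := wdist_one_mul_le (b ^ (j - m) : G) (a ^ (n - j))
        have h3 := wdist_one_pow 1 (j - m)
        have h4 := wdist_one_pow 0 (n - j)
        have hb : (b : G) ^ (j - m) = (PresentedGroup.of 1 : G) ^ (j - m) := rfl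
        have ha : (a : G) ^ (n - j) = (PresentedGroup.of 0 : G) ^ (n - j) := rfl
        rw [h1]
        rw [hb, ha] at h2 ⊢
        omega
      · have hA0 : Aval 0 ((βray j m)⁻¹ * βray j n) = ((n : ℤ) - j) := by
          rw [hx, Aval_mul, Aval_pow, Aval_pow]
          simp [a, b]
          omega
        have hA1 : Aval 1 ((βray j m)⁻¹ * βray j n) = ((j : ℤ) - m) := by
          rw [hx, Aval_mul, Aval_pow, Aval_pow]
          simp [a, b]
          omega
        have := Aval_le_wdist (βray j m) (βray j n)
        rw [hA0, hA1] at this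
        omega
    · -- j < m ≤ n
      have hx : (βray j m)⁻¹ * βray j n = a ^ (n - m) := by
        simp only [βray, if_neg (by omega : ¬ m ≤ j), if_neg (by omega : ¬ n ≤ j)]
        rw [show (a : G) ^ (n - j) = a ^ (m - j) * a ^ (n - m) by rw [← pow_add]; congr 1; omega]
        group
      apply le_antisymm
      · have h1 : wdist (βray j m) (βray j n) = wdist 1 (a ^ (n - m)) := by
          rw [wdist_eq, wdist_eq, hx, inv_one, one_mul]
        have h2 := wdist_one_pow 0 (n - m)
        rw [h1]
        have ha : (a : G) ^ (n - m) = (PresentedGroup.of 0 : G) ^ (n - m) := rfl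
        rw [ha]
        omega
      · have hA0 : Aval 0 ((βray j m)⁻¹ * βray j n) = ((n : ℤ) - m) := by
          rw [hx, Aval_pow]
          simp [a]
          omega
        have := Aval_le_wdist (βray j m) (βray j n)
        rw [hA0] at this
        omega

lemma geodesic_beta (j : ℕ) : IsGeodesicRayN (βray j) := by
  intro m n
  rcases le_total m n with h | h
  · exact wdist_beta_le j m n h
  · rw [wdist_symm, Nat.dist_comm]
    exact wdist_beta_le j n m h

/-! ### the β ray is not D-contracting for D < j/2 -/

lemma wdist_cpow_beta_ge (j N k : ℕ) (g : G) (hA2 : Aval 2 g = 0) :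
    N ≤ wdist (g * c ^ N) (βray j k) := by
  have hA : Aval 2 ((g * c ^ N)⁻¹ * βray j k) = -(N : ℤ) := by
    have hbk : Aval 2 (βray j k) = 0 := by
      simp only [βray]
      split
      · rw [Aval_pow]; simp [b]
      · rw [Aval_mul, Aval_pow, Aval_pow]; simp [a, b]
    rw [mul_inv_rev, mul_assoc, Aval_mul, Aval_mul, hbk, Aval_inv, Aval_inv, hA2, Aval_pow]
    simp [c]
  have := Aval_le_wdist (g * c ^ N) (βray j k)
  rw [hA] at this
  omega

lemma beta_not_contracting (j : ℕ) (hj : 1 ≤ j) (D : ℝ) (hD : D < (j : ℝ) / 2) :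
    ¬ IsContractingRay D (βray j) := by
  intro hcon
  set N := j + 1 with hN
  set x : G := c ^ N with hxdef
  have hdisj : ∀ k : ℕ, ¬ wdist x (βray j k) < N := by
    intro k hk
    have := wdist_cpow_beta_ge j N k 1 (by simp)
    rw [one_mul, ← hxdef] at this
    omega
  have h0mem : (0 : ℕ) ∈ {k : ℕ | ∃ y : G, wdist x y < N ∧ k ∈ projParams (βray j) y} := by
    refine ⟨x, by simp [hN], ?_⟩
    intro m
    have hup : wdist x (βray j 0) ≤ N := by
      have hx0 : x⁻¹ * βray j 0 = ((PresentedGroup.of 2 : G) ^ N)⁻¹ := by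
        simp only [βray]
        simp [hxdef, c]
      have : x⁻¹ * βray j 0 = wprod (List.replicate N (2, false)) := by
        rw [hx0, wprod_replicate]
        simp [letterF, inv_pow]
      simpa using wdist_le this
    have hlow := wdist_cpow_beta_ge j N m 1 (by simp)
    rw [one_mul] at hlow
    exact le_trans hup hlow
  have hjmem : j ∈ {k : ℕ | ∃ y : G, wdist x y < N ∧ k ∈ projParams (βray j) y} := by
    refine ⟨b ^ j * c ^ N, ?_, ?_⟩
    · -- wdist x (b^j c^N) ≤ j < N
      have hcomm : x⁻¹ * (b ^ j * c ^ N) = b ^ j := by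
        rw [hxdef]
        have : (c : G) ^ N * b ^ j = b ^ j * c ^ N := ((bc_comm.symm).pow_pow N j)
        rw [← this]
        group
      have : x⁻¹ * (b ^ j * c ^ N) = wprod (List.replicate j (1, true)) := by
        rw [hcomm, wprod_replicate]
        simp [letterF, b]
      have := wdist_le this
      simp only [List.length_replicate] at this
      omega
    · intro m
      have hup : wdist (b ^ j * c ^ N) (βray j j) ≤ N := by
        have hx0 : (b ^ j * c ^ N)⁻¹ * βray j j = ((PresentedGroup.of 2 : G) ^ N)⁻¹ := by
          simp only [βray]
          simp [c]
        have : (b ^ j * c ^ N)⁻¹ * βray j j = wprod (List.replicate N (2, false)) := by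
          rw [hx0, wprod_replicate]
          simp [letterF, inv_pow]
        simpa using wdist_le this
      have hlow := wdist_cpow_beta_ge j N m (b ^ j) (by rw [Aval_pow]; simp [b])
      exact le_trans hup hlow
  have := hcon x N hdisj 0 h0mem j hjmem
  rw [Nat.cast_zero, zero_sub, abs_neg, abs_of_nonneg (by positivity : (0:ℝ) ≤ (j:ℝ))] at this
  have : (j : ℝ) < (j : ℝ) := lt_of_le_of_lt this (by linarith)
  exact lt_irrefl _ this


/-! ### normal form model for the free product -/

abbrev Z2 := ℤ × ℤ
abbrev RawNF := ℤ × List (Z2 × ℤ)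

def ValidL : List (Z2 × ℤ) → Prop
  | [] => True
  | [p] => p.1 ≠ 0
  | p :: q :: rest => p.1 ≠ 0 ∧ p.2 ≠ 0 ∧ ValidL (q :: rest)

@[simp] lemma ValidL_nil : ValidL [] := trivial

lemma ValidL_singleton (p : Z2 × ℤ) : ValidL [p] ↔ p.1 ≠ 0 := Iff.rfl

lemma ValidL_cons₂ (p q : Z2 × ℤ) (rest : List (Z2 × ℤ)) :
    ValidL (p :: q :: rest) ↔ p.1 ≠ 0 ∧ p.2 ≠ 0 ∧ ValidL (q :: rest) := Iff.rfl

lemma ValidL_tail {p : Z2 × ℤ} {l : List (Z2 × ℤ)} (h : ValidL (p :: l)) : ValidL l := by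
  cases l with
  | nil => trivial
  | cons q rest => exact ((ValidL_cons₂ p q rest).mp h).2.2

lemma ValidL_head {p : Z2 × ℤ} {l : List (Z2 × ℤ)} (h : ValidL (p :: l)) : p.1 ≠ 0 := by
  cases l with
  | nil => exact (ValidL_singleton p).mp h
  | cons q rest => exact ((ValidL_cons₂ p q rest).mp h).1

lemma ValidL_snd {p : Z2 × ℤ} {q : Z2 × ℤ} {rest : List (Z2 × ℤ)}
    (h : ValidL (p :: q :: rest)) : p.2 ≠ 0 := ((ValidL_cons₂ p q rest).mp h).2.1

def NF := {x : RawNF // ValidL x.2}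

def vmulRaw (v : Z2) : RawNF → RawNF
  | (s, []) => if v = 0 then (s, []) else if s = 0 then (0, [(v, 0)]) else (0, [(v, s)])
  | (s, (B, t) :: rest) =>
      if v = 0 then (s, (B, t) :: rest)
      else if s = 0 then
        (if B + v = 0 then (t, rest) else (0, (B + v, t) :: rest))
      else (0, (v, s) :: (B, t) :: rest)

lemma vmulRaw_zero (x : RawNF) : vmulRaw 0 x = x := by
  obtain ⟨s, l⟩ := x
  rcases l with _ | ⟨⟨B, t⟩, rest⟩ <;> simp [vmulRaw]

lemma vmulRaw_valid (v : Z2) (x : RawNF) (hx : ValidL x.2) : ValidL (vmulRaw v x).2 := by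
  obtain ⟨s, l⟩ := x
  rcases l with _ | ⟨⟨B, t⟩, rest⟩
  · by_cases hv : v = 0 <;> by_cases hs : s = 0 <;>
      simp_all [vmulRaw, ValidL_singleton]
  · simp only at hx
    have hB : B ≠ 0 := ValidL_head hx
    have hrest : ValidL rest := ValidL_tail hx
    by_cases hv : v = 0
    · simpa [vmulRaw, hv] using hx
    · by_cases hs : s = 0
      · by_cases hBv : B + v = 0
        · simpa [vmulRaw, hv, hs, hBv] using hrest
        · simp only [vmulRaw, if_neg hv, if_pos hs, if_pos rfl, if_neg hBv]
          cases rest with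
          | nil => simpa [ValidL_singleton] using hBv
          | cons q rest' =>
              have ht : t ≠ 0 := ValidL_snd hx
              exact (ValidL_cons₂ _ _ _).mpr ⟨hBv, ht, ValidL_tail hx⟩
      · simp only [vmulRaw, if_neg hv, if_neg hs]
        exact (ValidL_cons₂ _ _ _).mpr ⟨hv, hs, hx⟩

set_option maxHeartbeats 3000000 in
lemma vmulRaw_vmulRaw (v w : Z2) (x : RawNF) (hx : ValidL x.2) :
    vmulRaw v (vmulRaw w x) = vmulRaw (v + w) x := by
  obtain ⟨v1, v2⟩ := v
  obtain ⟨w1, w2⟩ := w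
  obtain ⟨s, l⟩ := x
  rcases l with _ | ⟨⟨⟨B1, B2⟩, t⟩, rest⟩
  · simp only [vmulRaw, Prod.mk_add_mk, Prod.mk_eq_zero]
    split_ifs <;>
      simp only [vmulRaw, Prod.mk_add_mk, Prod.mk_eq_zero] <;>
      (try split_ifs) <;>
      simp_all [Prod.ext_iff] <;>
      omega
  · rcases rest with _ | ⟨⟨⟨C1, C2⟩, u⟩, rest'⟩
    · have hB : ¬(B1 = 0 ∧ B2 = 0) := by
        have := ValidL_head hx
        simpa [Prod.ext_iff] using this
      clear hx
      simp only [vmulRaw, Prod.mk_add_mk, Prod.mk_eq_zero]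
      split_ifs <;>
        simp only [vmulRaw, Prod.mk_add_mk, Prod.mk_eq_zero] <;>
        (try split_ifs) <;>
        simp_all [Prod.ext_iff] <;>
        omega
    · have hB : ¬(B1 = 0 ∧ B2 = 0) := by
        have := ValidL_head hx
        simpa [Prod.ext_iff] using this
      have ht : t ≠ 0 := ValidL_snd hx
      have hC : ¬(C1 = 0 ∧ C2 = 0) := by
        have := ValidL_head (ValidL_tail hx)
        simpa [Prod.ext_iff] using this
      clear hx
      simp only [vmulRaw, Prod.mk_add_mk, Prod.mk_eq_zero]
      split_ifs <;>
        simp only [vmulRaw, Prod.mk_add_mk, Prod.mk_eq_zero] <;>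
        (try split_ifs) <;>
        simp_all [Prod.ext_iff] <;>
        omega


/-! ### permutations and the action homomorphism -/

def vmulN (v : Z2) (x : NF) : NF := ⟨vmulRaw v x.1, vmulRaw_valid v x.1 x.2⟩

lemma vmulN_vmulN (v w : Z2) (x : NF) : vmulN v (vmulN w x) = vmulN (v + w) x :=
  Subtype.ext (vmulRaw_vmulRaw v w x.1 x.2)

@[simp] lemma vmulN_zero (x : NF) : vmulN 0 x = x := Subtype.ext (vmulRaw_zero x.1)

def vperm (v : Z2) : Equiv.Perm NF where
  toFun := vmulN v
  invFun := vmulN (-v)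
  left_inv := fun x => by rw [vmulN_vmulN, neg_add_cancel, vmulN_zero]
  right_inv := fun x => by rw [vmulN_vmulN, add_neg_cancel, vmulN_zero]

def aperm (ε : ℤ) : Equiv.Perm NF where
  toFun x := ⟨(x.1.1 + ε, x.1.2), x.2⟩
  invFun x := ⟨(x.1.1 - ε, x.1.2), x.2⟩
  left_inv := fun x => by
    apply Subtype.ext
    show (x.1.1 + ε - ε, x.1.2) = x.1
    rw [add_sub_cancel_right]
  right_inv := fun x => by
    apply Subtype.ext
    show (x.1.1 - ε + ε, x.1.2) = x.1
    rw [sub_add_cancel]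

lemma vperm_mul (v w : Z2) : vperm v * vperm w = vperm (v + w) := by
  apply Equiv.ext
  intro x
  show vmulN v (vmulN w x) = vmulN (v + w) x
  exact vmulN_vmulN v w x

lemma vperm_comm (v w : Z2) : vperm v * vperm w = vperm w * vperm v := by
  rw [vperm_mul, vperm_mul, add_comm]

def fgen : Fin 3 → Equiv.Perm NF := ![aperm 1, vperm (1, 0), vperm (0, 1)]

noncomputable def Ψ : G →* Equiv.Perm NF :=
  PresentedGroup.toGroup (f := fgen) (by
    rintro r hr
    rw [rels, Set.mem_singleton_iff] at hr
    subst hr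
    simp only [map_mul, map_inv, FreeGroup.lift_apply_of]
    have : fgen 1 * fgen 2 = fgen 2 * fgen 1 := by
      show vperm (1, 0) * vperm (0, 1) = vperm (0, 1) * vperm (1, 0)
      exact vperm_comm _ _
    rw [this]
    group)

@[simp] lemma Ψ_of (i : Fin 3) : Ψ (PresentedGroup.of i : G) = fgen i :=
  PresentedGroup.toGroup.of _

def base : NF := ⟨(0, []), trivial⟩

noncomputable def nf (g : G) : NF := Ψ g base

/-! ### realization map -/

def c' : G := PresentedGroup.of 2

noncomputable def prodL (l : List (Z2 × ℤ)) : G :=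
  (l.map fun p => b ^ p.1.1 * c ^ p.1.2 * a ^ p.2).prod

noncomputable def prodNF (x : NF) : G := a ^ x.1.1 * prodL x.1.2

@[simp] lemma prodL_nil : prodL [] = 1 := rfl

@[simp] lemma prodL_cons (p : Z2 × ℤ) (l : List (Z2 × ℤ)) :
    prodL (p :: l) = b ^ p.1.1 * c ^ p.1.2 * a ^ p.2 * prodL l := by
  simp [prodL]

lemma cb_comm_zpow (m n : ℤ) : (c : G) ^ m * b ^ n = b ^ n * c ^ m :=
  ((bc_comm.symm).zpow_zpow m n).eq

lemma prodNF_aperm (ε : ℤ) (x : NF) : prodNF (aperm ε x) = a ^ ε * prodNF x := by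
  show a ^ (x.1.1 + ε) * prodL x.1.2 = a ^ ε * (a ^ x.1.1 * prodL x.1.2)
  rw [← mul_assoc, ← zpow_add, add_comm]

lemma prodNF_vmulN (v : Z2) (x : NF) :
    prodNF (vmulN v x) = b ^ v.1 * c ^ v.2 * prodNF x := by
  obtain ⟨⟨s, l⟩, hval⟩ := x
  by_cases hv : v = 0
  · subst hv
    rw [show vmulN 0 ⟨(s, l), hval⟩ = ⟨(s, l), hval⟩ from vmulN_zero _]
    simp [prodNF]
  rcases l with _ | ⟨⟨B, t⟩, rest⟩
  · by_cases hs : s = 0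
    · subst hs
      show prodNF ⟨vmulRaw v (0, []), _⟩ = _
      simp only [vmulRaw, if_neg hv, if_pos rfl]
      show a ^ (0:ℤ) * prodL [(v, 0)] = b ^ v.1 * c ^ v.2 * (a ^ (0:ℤ) * prodL [])
      simp
    · show prodNF ⟨vmulRaw v (s, []), _⟩ = _
      simp only [vmulRaw, if_neg hv, if_neg hs]
      show a ^ (0:ℤ) * prodL [(v, s)] = b ^ v.1 * c ^ v.2 * (a ^ s * prodL [])
      simp [mul_assoc]
  · by_cases hs : s = 0
    · subst hs
      by_cases hBv : B + v = 0
      · show prodNF ⟨vmulRaw v (0, (B, t) :: rest), _⟩ = _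
        simp only [vmulRaw, if_neg hv, if_pos rfl, if_pos hBv]
        show a ^ t * prodL rest = b ^ v.1 * c ^ v.2 * (a ^ (0:ℤ) * prodL ((B, t) :: rest))
        have hB : B = -v := by
          calc B = B + v - v := by abel
          _ = -v := by rw [hBv]; abel
        subst hB
        rw [prodL_cons, zpow_zero, one_mul]
        rw [show ((-v : Z2)).1 = -v.1 from rfl, show ((-v : Z2)).2 = -v.2 from rfl]
        have hkey : (b:G) ^ v.1 * c ^ v.2 * (b ^ (-v.1) * c ^ (-v.2)) = 1 := by
          calc (b:G) ^ v.1 * c ^ v.2 * (b ^ (-v.1) * c ^ (-v.2))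
              = b ^ v.1 * (c ^ v.2 * b ^ (-v.1)) * c ^ (-v.2) := by group
          _ = b ^ v.1 * (b ^ (-v.1) * c ^ v.2) * c ^ (-v.2) := by rw [cb_comm_zpow]
          _ = 1 := by group
        calc a ^ t * prodL rest
            = (b ^ v.1 * c ^ v.2 * (b ^ (-v.1) * c ^ (-v.2))) * (a ^ t * prodL rest) := by
              rw [hkey, one_mul]
        _ = b ^ v.1 * c ^ v.2 * (b ^ (-v.1) * c ^ (-v.2) * a ^ t * prodL rest) := by group
      · show prodNF ⟨vmulRaw v (0, (B, t) :: rest), _⟩ = _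
        simp only [vmulRaw, if_neg hv, if_pos rfl, if_neg hBv]
        show a ^ (0:ℤ) * prodL ((B + v, t) :: rest)
            = b ^ v.1 * c ^ v.2 * (a ^ (0:ℤ) * prodL ((B, t) :: rest))
        rw [zpow_zero, one_mul, one_mul, prodL_cons, prodL_cons]
        rw [show ((B + v : Z2)).1 = B.1 + v.1 from rfl, show ((B + v : Z2)).2 = B.2 + v.2 from rfl]
        have hkey2 : (b:G) ^ (B.1 + v.1) * c ^ (B.2 + v.2)
            = b ^ v.1 * c ^ v.2 * (b ^ B.1 * c ^ B.2) := by
          calc (b:G) ^ (B.1 + v.1) * c ^ (B.2 + v.2)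
              = (b ^ v.1 * b ^ B.1) * (c ^ v.2 * c ^ B.2) := by
                rw [← zpow_add, ← zpow_add, add_comm B.1 v.1, add_comm B.2 v.2]
          _ = b ^ v.1 * (b ^ B.1 * c ^ v.2) * c ^ B.2 := by group
          _ = b ^ v.1 * (c ^ v.2 * b ^ B.1) * c ^ B.2 := by rw [← cb_comm_zpow]
          _ = b ^ v.1 * c ^ v.2 * (b ^ B.1 * c ^ B.2) := by group
        calc (b:G) ^ (B.1 + v.1) * c ^ (B.2 + v.2) * a ^ t * prodL rest
            = ((b:G) ^ (B.1 + v.1) * c ^ (B.2 + v.2)) * (a ^ t * prodL rest) := by group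
        _ = (b ^ v.1 * c ^ v.2 * (b ^ B.1 * c ^ B.2)) * (a ^ t * prodL rest) := by rw [hkey2]
        _ = b ^ v.1 * c ^ v.2 * (b ^ B.1 * c ^ B.2 * a ^ t * prodL rest) := by group
    · show prodNF ⟨vmulRaw v (s, (B, t) :: rest), _⟩ = _
      simp only [vmulRaw, if_neg hv, if_neg hs]
      show a ^ (0:ℤ) * prodL ((v, s) :: (B, t) :: rest)
          = b ^ v.1 * c ^ v.2 * (a ^ s * prodL ((B, t) :: rest))
      rw [zpow_zero, one_mul, prodL_cons]
      rw [mul_assoc, mul_assoc]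


/-! ### prodNF ∘ nf = id -/

lemma prodNF_psi_letter (i : Fin 3) (x : NF) :
    prodNF (Ψ (PresentedGroup.of i : G) x) = PresentedGroup.of i * prodNF x := by
  rw [Ψ_of]
  fin_cases i
  · show prodNF (aperm 1 x) = a * prodNF x
    rw [prodNF_aperm, zpow_one]
  · show prodNF (vmulN (1, 0) x) = b * prodNF x
    rw [prodNF_vmulN]
    norm_num
  · show prodNF (vmulN (0, 1) x) = c * prodNF x
    rw [prodNF_vmulN]
    norm_num

noncomputable def goodSub : Subgroup G where
  carrier := {g : G | ∀ x : NF, prodNF (Ψ g x) = g * prodNF x}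
  one_mem' := by
    intro x
    simp
  mul_mem' := by
    intro g h hg hh x
    rw [map_mul, Equiv.Perm.mul_apply, hg, hh, mul_assoc]
  inv_mem' := by
    intro g hg x
    have := hg ((Ψ g)⁻¹ x)
    rw [show (Ψ g) ((Ψ g)⁻¹ x) = x from (Ψ g).apply_symm_apply x] at this
    rw [map_inv]
    calc prodNF ((Ψ g)⁻¹ x) = g⁻¹ * (g * prodNF ((Ψ g)⁻¹ x)) := by group
    _ = g⁻¹ * prodNF x := by rw [← this]

lemma prodNF_psi (g : G) (x : NF) : prodNF (Ψ g x) = g * prodNF x := by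
  have hg : g ∈ goodSub := PresentedGroup.generated_by rels goodSub
    (fun j => prodNF_psi_letter j) g
  exact hg x

lemma prodNF_nf (g : G) : prodNF (nf g) = g := by
  rw [nf, prodNF_psi]
  show g * prodNF base = g
  rw [show prodNF base = a ^ (0:ℤ) * prodL [] from rfl]
  simp

/-! ### normal form of powers of a -/

lemma nf_a_zpow (k : ℤ) : (nf (a ^ k)).1 = (k, []) := by
  induction k using Int.induction_on with
  | zero => rw [nf, zpow_zero, map_one]; rfl
  | succ n ih =>
      have : a ^ ((n : ℤ) + 1) = a * a ^ (n : ℤ) := by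
        rw [show (n:ℤ) + 1 = 1 + n by ring, zpow_add, zpow_one]
      rw [nf, this, map_mul, Equiv.Perm.mul_apply]
      have ha : Ψ a = aperm 1 := Ψ_of 0
      rw [ha]
      show ((nf (a ^ (n:ℤ))).1.1 + 1, (nf (a ^ (n:ℤ))).1.2) = ((n : ℤ) + 1, [])
      rw [ih]
  | pred n ih =>
      have : a ^ (-(n : ℤ) - 1) = a⁻¹ * a ^ (-(n : ℤ)) := by
        rw [← zpow_neg_one, ← zpow_add]
        congr 1
        ring
      rw [nf, this, map_mul, Equiv.Perm.mul_apply, map_inv]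
      have ha : Ψ a = aperm 1 := Ψ_of 0
      rw [ha]
      show ((nf (a ^ (-(n:ℤ)))).1.1 - 1, (nf (a ^ (-(n:ℤ)))).1.2) = (-(n : ℤ) - 1, [])
      rw [ih]

lemma eq_a_zpow_of_nf_nil (g : G) (h : (nf g).1.2 = []) : g = a ^ (nf g).1.1 := by
  conv_lhs => rw [← prodNF_nf g]
  rw [prodNF, h, prodL_nil, mul_one]

/-! ### trailing exponent -/

def lastExp : List (Z2 × ℤ) → ℤ → ℤ
  | [], s => s
  | [p], _ => p.2
  | _ :: q :: rest, s => lastExp (q :: rest) s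

@[simp] lemma lastExp_nil (s : ℤ) : lastExp [] s = s := rfl

lemma lastExp_cons_ne_nil (p : Z2 × ℤ) (l : List (Z2 × ℤ)) (s s' : ℤ) (hl : l ≠ []) :
    lastExp (p :: l) s = lastExp l s' := by
  induction l generalizing p s s' with
  | nil => exact absurd rfl hl
  | cons q rest ih =>
      show lastExp (q :: rest) s = _
      cases rest with
      | nil => rfl
      | cons r rest' => exact ih q s s' (by simp)

noncomputable def trailNF (x : NF) : ℤ := lastExp x.1.2 x.1.1

lemma trail_vmulN (v : Z2) (x : NF) : trailNF (vmulN v x) = trailNF x := by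
  obtain ⟨⟨s, l⟩, hval⟩ := x
  by_cases hv : v = 0
  · subst hv; rw [show vmulN 0 ⟨(s, l), hval⟩ = ⟨(s, l), hval⟩ from vmulN_zero _]
  rcases l with _ | ⟨⟨B, t⟩, rest⟩
  · by_cases hs : s = 0
    · subst hs
      show lastExp (vmulRaw v (0, [])).2 (vmulRaw v (0, [])).1 = lastExp [] 0
      simp only [vmulRaw, if_neg hv, if_pos rfl]
      rfl
    · show lastExp (vmulRaw v (s, [])).2 (vmulRaw v (s, [])).1 = lastExp [] s
      simp only [vmulRaw, if_neg hv, if_neg hs]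
      rfl
  · by_cases hs : s = 0
    · subst hs
      by_cases hBv : B + v = 0
      · show lastExp (vmulRaw v (0, (B, t) :: rest)).2 (vmulRaw v (0, (B, t) :: rest)).1
            = lastExp ((B, t) :: rest) 0
        simp only [vmulRaw, if_neg hv, if_pos rfl, if_pos hBv]
        cases rest with
        | nil => rfl
        | cons q rest' =>
            show lastExp (q :: rest') t = lastExp ((B, t) :: q :: rest') 0
            rw [lastExp_cons_ne_nil (B, t) (q :: rest') 0 t (by simp)]
      · show lastExp (vmulRaw v (0, (B, t) :: rest)).2 (vmulRaw v (0, (B, t) :: rest)).1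
            = lastExp ((B, t) :: rest) 0
        simp only [vmulRaw, if_neg hv, if_pos rfl, if_neg hBv]
        cases rest with
        | nil => rfl
        | cons q rest' =>
            show lastExp ((B + v, t) :: q :: rest') 0 = lastExp ((B, t) :: q :: rest') 0
            rw [lastExp_cons_ne_nil (B + v, t) (q :: rest') 0 0 (by simp),
              lastExp_cons_ne_nil (B, t) (q :: rest') 0 0 (by simp)]
    · show lastExp (vmulRaw v (s, (B, t) :: rest)).2 (vmulRaw v (s, (B, t) :: rest)).1
          = lastExp ((B, t) :: rest) s
      simp only [vmulRaw, if_neg hv, if_neg hs]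
      show lastExp ((v, s) :: (B, t) :: rest) 0 = lastExp ((B, t) :: rest) s
      rw [lastExp_cons_ne_nil (v, s) ((B, t) :: rest) 0 s (by simp)]

lemma trail_aperm (ε : ℤ) (x : NF) (h : x.1.2 ≠ []) : trailNF (aperm ε x) = trailNF x := by
  obtain ⟨⟨s, l⟩, hval⟩ := x
  rcases l with _ | ⟨p, rest⟩
  · exact absurd rfl h
  · show lastExp (p :: rest) (s + ε) = lastExp (p :: rest) s
    cases rest with
    | nil => rfl
    | cons q rest' =>
        rw [lastExp_cons_ne_nil p (q :: rest') (s + ε) s (by simp),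
          lastExp_cons_ne_nil p (q :: rest') s s (by simp)]


/-! ### prefix exponent and step lemma -/

noncomputable def sexp (g : G) : ℤ := - trailNF (nf g⁻¹)

lemma sexp_a_zpow (k : ℤ) : sexp (a ^ k) = k := by
  rw [sexp, ← zpow_neg]
  show - lastExp (nf (a ^ (-k))).1.2 (nf (a ^ (-k))).1.1 = k
  rw [show (nf (a ^ (-k))).1.2 = ((-k : ℤ), ([] : List (Z2 × ℤ))).2 from by rw [nf_a_zpow],
    show (nf (a ^ (-k))).1.1 = ((-k : ℤ), ([] : List (Z2 × ℤ))).1 from by rw [nf_a_zpow]]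
  simp

lemma eq_apow_sexp_of_nil (g : G) (h : (nf g⁻¹).1.2 = []) : g = a ^ sexp g := by
  have h2 := eq_a_zpow_of_nf_nil g⁻¹ h
  have h3 : sexp g = - (nf g⁻¹).1.1 := by
    rw [sexp]
    show - lastExp (nf g⁻¹).1.2 (nf g⁻¹).1.1 = _
    rw [h, lastExp_nil]
  calc g = (g⁻¹)⁻¹ := (inv_inv g).symm
  _ = (a ^ (nf g⁻¹).1.1)⁻¹ := by rw [← h2]
  _ = a ^ (- (nf g⁻¹).1.1) := by rw [zpow_neg]
  _ = a ^ sexp g := by rw [h3]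

lemma nf_mul_letter (g : G) (q : Fin 3 × Bool) :
    nf ((g * letterF q)⁻¹) = Ψ (letterF (q.1, !q.2)) (nf g⁻¹) := by
  rw [mul_inv_rev, letterF_inv, nf, nf, map_mul, Equiv.Perm.mul_apply]

lemma trail_letter_vtype (X : NF) (i : Fin 3) (bb : Bool) (hi : i = 1 ∨ i = 2) :
    trailNF (Ψ (letterF (i, bb)) X) = trailNF X := by
  rcases hi with rfl | rfl <;> cases bb
  · have hΨ : Ψ (letterF (1, false)) X = vmulN (-(1, 0)) X := by
      show Ψ ((PresentedGroup.of 1 : G)⁻¹) X = _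
      rw [map_inv, Ψ_of]
      rfl
    rw [hΨ, trail_vmulN]
  · have hΨ : Ψ (letterF (1, true)) X = vmulN (1, 0) X := by
      show Ψ (PresentedGroup.of 1 : G) X = _
      rw [Ψ_of]
      rfl
    rw [hΨ, trail_vmulN]
  · have hΨ : Ψ (letterF (2, false)) X = vmulN (-(0, 1)) X := by
      show Ψ ((PresentedGroup.of 2 : G)⁻¹) X = _
      rw [map_inv, Ψ_of]
      rfl
    rw [hΨ, trail_vmulN]
  · have hΨ : Ψ (letterF (2, true)) X = vmulN (0, 1) X := by
      show Ψ (PresentedGroup.of 2 : G) X = _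
      rw [Ψ_of]
      rfl
    rw [hΨ, trail_vmulN]

lemma psi_a_letter (X : NF) (bb : Bool) :
    Ψ (letterF (0, bb)) X = aperm (if bb then 1 else -1) X := by
  cases bb
  · show Ψ ((PresentedGroup.of 0 : G)⁻¹) X = _
    rw [map_inv, Ψ_of]
    show ((aperm 1)⁻¹ X : NF) = _
    apply Subtype.ext
    show (X.1.1 - 1, X.1.2) = (X.1.1 + (-1 : ℤ), X.1.2)
    rw [sub_eq_add_neg]
  · show Ψ (PresentedGroup.of 0 : G) X = _
    rw [Ψ_of]
    rfl

lemma sexp_step (g : G) (q : Fin 3 × Bool)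
    (h : sexp (g * letterF q) ≠ sexp g) :
    g = a ^ sexp g ∧ g * letterF q = a ^ sexp (g * letterF q) := by
  have htr : trailNF (nf ((g * letterF q)⁻¹)) ≠ trailNF (nf g⁻¹) := by
    intro heq
    apply h
    rw [sexp, sexp, heq]
  rw [nf_mul_letter] at htr
  obtain ⟨i, bb⟩ := q
  have hi : i = 0 ∨ i = 1 ∨ i = 2 := by omega
  rcases hi with rfl | rfl | rfl
  · -- generator a
    have hnil : (nf g⁻¹).1.2 = [] := by
      by_contra hne
      apply htr
      show trailNF (Ψ (letterF (0, !bb)) (nf g⁻¹)) = trailNF (nf g⁻¹)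
      rw [psi_a_letter]
      exact trail_aperm _ _ hne
    have hnil2 : (nf ((g * letterF (0, bb))⁻¹)).1.2 = [] := by
      rw [nf_mul_letter]
      show (Ψ (letterF (0, !bb)) (nf g⁻¹)).1.2 = []
      rw [psi_a_letter]
      exact hnil
    exact ⟨eq_apow_sexp_of_nil g hnil, eq_apow_sexp_of_nil _ hnil2⟩
  · exact absurd (trail_letter_vtype (nf g⁻¹) 1 (!bb) (Or.inl rfl)) htr
  · exact absurd (trail_letter_vtype (nf g⁻¹) 2 (!bb) (Or.inr rfl)) htr

/-! ### path lemma -/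

lemma path_visits (l : List (Fin 3 × Bool)) (p₀ : G)
    (h : sexp (p₀ * wprod l) ≠ sexp p₀) :
    (∃ i ≤ l.length, p₀ * wprod (l.take i) = a ^ sexp p₀) ∧
    (∃ i ≤ l.length, p₀ * wprod (l.take i) = a ^ sexp (p₀ * wprod l)) := by
  induction l generalizing p₀ with
  | nil => simp at h
  | cons q tl ih =>
      rw [wprod_cons, ← mul_assoc] at h
      by_cases hs : sexp (p₀ * letterF q) = sexp p₀
      · have h' : sexp ((p₀ * letterF q) * wprod tl) ≠ sexp (p₀ * letterF q) := by
          rw [hs]; exact h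
        obtain ⟨⟨i1, hi1, he1⟩, ⟨i2, hi2, he2⟩⟩ := ih (p₀ * letterF q) h'
        constructor
        · refine ⟨i1 + 1, by simpa using Nat.succ_le_succ hi1, ?_⟩
          rw [List.take_succ_cons, wprod_cons, ← mul_assoc, he1, hs]
        · refine ⟨i2 + 1, by simpa using Nat.succ_le_succ hi2, ?_⟩
          rw [List.take_succ_cons, wprod_cons, ← mul_assoc, he2, wprod_cons, ← mul_assoc]
      · obtain ⟨hg0, hg1⟩ := sexp_step p₀ q hs
        constructor
        · exact ⟨0, Nat.zero_le _, by simpa using hg0⟩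
        · by_cases h2 : sexp ((p₀ * letterF q) * wprod tl) = sexp (p₀ * letterF q)
          · refine ⟨1, by simp, ?_⟩
            rw [show (q :: tl).take 1 = [q] from rfl, wprod_cons, wprod_cons, wprod_nil,
              mul_one, ← mul_assoc, h2]
            exact hg1
          · obtain ⟨_, ⟨i2, hi2, he2⟩⟩ := ih (p₀ * letterF q) h2
            refine ⟨i2 + 1, by simpa using Nat.succ_le_succ hi2, ?_⟩
            rw [List.take_succ_cons, wprod_cons, ← mul_assoc, he2, wprod_cons, ← mul_assoc]


/-! ### distance to the axis -/

lemma wdist_apow_formula (y : G) (m : ℤ) :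
    wdist y (a ^ m) = wdist y (a ^ sexp y) + (m - sexp y).natAbs := by
  apply le_antisymm
  · have h1 := wdist_triangle y (a ^ sexp y) (a ^ m)
    rwa [wdist_zpow_a] at h1
  · by_cases hm : m = sexp y
    · subst hm
      simp
    · obtain ⟨l, hlen, hl⟩ := exists_min_word y (a ^ m)
      have hend : y * wprod l = a ^ m := by
        rw [← hl, mul_inv_cancel_left]
      have hch : sexp (y * wprod l) ≠ sexp y := by
        rw [hend, sexp_a_zpow]
        exact hm
      obtain ⟨⟨i, hi, he⟩, -⟩ := path_visits l y hch
      have d1 : wdist y (a ^ sexp y) ≤ i := by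
        have hw : y⁻¹ * a ^ sexp y = wprod (l.take i) := by
          rw [← he, inv_mul_cancel_left]
        calc wdist y (a ^ sexp y) ≤ (l.take i).length := wdist_le hw
        _ ≤ i := List.length_take_le i l
      have d2 : (m - sexp y).natAbs ≤ l.length - i := by
        have hsplit : wprod (l.take i) * wprod (l.drop i) = wprod l := by
          rw [← wprod_append, List.take_append_drop]
        have hw : (a ^ sexp y)⁻¹ * a ^ m = wprod (l.drop i) := by
          rw [← he, ← hend, ← hsplit]
          group
        have h3 := wdist_le hw
        rw [wdist_zpow_a, List.length_drop] at h3
        exact h3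
      omega

lemma proj_param_eq (y : G) (k : ℕ) (hk : ∀ m : ℕ, wdist y (αray k) ≤ wdist y (αray m)) :
    (k : ℤ) = max (sexp y) 0 := by
  have hform : ∀ m : ℕ, wdist y (αray m) = wdist y (a ^ sexp y) + ((m : ℤ) - sexp y).natAbs := by
    intro m
    have : αray m = a ^ (m : ℤ) := by
      show a ^ m = a ^ (m : ℤ)
      rw [zpow_natCast]
    rw [this]
    exact wdist_apow_formula y (m : ℤ)
  have habs : ∀ m : ℕ, ((k:ℤ) - sexp y).natAbs ≤ ((m:ℤ) - sexp y).natAbs := by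
    intro m
    have h1 := hk m
    rw [hform k, hform m] at h1
    omega
  have h1 := habs (sexp y).toNat
  have h2 := habs 0
  omega

lemma seg_visits (u w : G) (hne : sexp u ≠ sexp w) (t : ℤ) (ht : t = sexp u ∨ t = sexp w) :
    ∃ q : G, q = a ^ t ∧ wdist u q ≤ wdist u w ∧ wdist q w ≤ wdist u w := by
  obtain ⟨l, hlen, hl⟩ := exists_min_word u w
  have hend : u * wprod l = w := by rw [← hl, mul_inv_cancel_left]
  have hch : sexp (u * wprod l) ≠ sexp u := by
    rw [hend]
    exact Ne.symm hne
  obtain ⟨h1, h2⟩ := path_visits l u hch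
  have pick : ∃ i ≤ l.length, u * wprod (l.take i) = a ^ t := by
    rcases ht with rfl | rfl
    · exact h1
    · rw [hend] at h2
      exact h2
  obtain ⟨i, hi, he⟩ := pick
  refine ⟨u * wprod (l.take i), he, ?_, ?_⟩
  · have hw : u⁻¹ * (u * wprod (l.take i)) = wprod (l.take i) := by
      rw [inv_mul_cancel_left]
    calc wdist u (u * wprod (l.take i)) ≤ (l.take i).length := wdist_le hw
    _ ≤ l.length := by
        have := List.length_take_le i l
        omega
    _ = wdist u w := hlen
  · have hsplit : wprod (l.take i) * wprod (l.drop i) = wprod l := by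
      rw [← wprod_append, List.take_append_drop]
    have hw : (u * wprod (l.take i))⁻¹ * w = wprod (l.drop i) := by
      rw [← hend, ← hsplit]
      group
    calc wdist (u * wprod (l.take i)) w ≤ (l.drop i).length := wdist_le hw
    _ ≤ l.length := by rw [List.length_drop]; omega
    _ = wdist u w := hlen

lemma alpha_contracting : IsContractingRay 0 αray := by
  intro x r hdisj k hk l hl
  obtain ⟨y, hxy, hky⟩ := hk
  obtain ⟨y', hxy', hly'⟩ := hl
  have hkk : (k : ℤ) = max (sexp y) 0 := proj_param_eq y k hky
  have hll : (l : ℤ) = max (sexp y') 0 := proj_param_eq y' l hly'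
  suffices hkl : k = l by
    rw [hkl]
    simp
  by_contra hne
  have hnez : (k : ℤ) ≠ (l : ℤ) := by exact_mod_cast hne
  have hsne : sexp y ≠ sexp y' := by
    intro h
    apply hnez
    rw [hkk, hll, h]
  set M := max (sexp y) (sexp y') with hM
  have hM0 : 0 ≤ M := by omega
  have hMor : M = sexp y ∨ M = sexp y' := max_choice _ _
  have hq : ∃ q : G, q = a ^ M ∧ wdist x q < r := by
    rcases hMor with hMy | hMy'
    · by_cases hxs : sexp x = sexp y
      · have hns : sexp x ≠ sexp y' := by rw [hxs]; exact hsne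
        obtain ⟨q, hqe, hq1, hq2⟩ := seg_visits x y' hns M (Or.inl (by rw [hMy, ← hxs]))
        exact ⟨q, hqe, lt_of_le_of_lt hq1 hxy'⟩
      · obtain ⟨q, hqe, hq1, hq2⟩ := seg_visits y x (fun h => hxs h.symm) M (Or.inl hMy)
        refine ⟨q, hqe, ?_⟩
        rw [wdist_symm]
        calc wdist q x ≤ wdist y x := hq2
        _ = wdist x y := wdist_symm y x
        _ < r := hxy
    · by_cases hxs : sexp x = sexp y'
      · have hns : sexp y ≠ sexp x := by rw [hxs]; exact hsne
        obtain ⟨q, hqe, hq1, hq2⟩ := seg_visits y x hns M (Or.inr (by rw [hMy', ← hxs]))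
        refine ⟨q, hqe, ?_⟩
        rw [wdist_symm]
        calc wdist q x ≤ wdist y x := hq2
        _ = wdist x y := wdist_symm y x
        _ < r := hxy
      · obtain ⟨q, hqe, hq1, hq2⟩ := seg_visits x y' (fun h => hxs h) M (Or.inr hMy')
        exact ⟨q, hqe, lt_of_le_of_lt hq1 hxy'⟩
  obtain ⟨q, hqa, hqr⟩ := hq
  apply hdisj M.toNat
  have hray : αray M.toNat = q := by
    rw [hqa]
    show a ^ M.toNat = a ^ M
    rw [← zpow_natCast, Int.toNat_of_nonneg hM0]
  rw [hray]
  exact hqr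


/-- In `ℤ * ℤ² = ⟨a⟩ * ⟨b,c⟩` with the word metric on generators `{a,b,c}`: for each
`j ≥ 1`, `β^j = b^j a a a ⋯` is a geodesic ray, `α = a a a ⋯` is a geodesic ray which is
`0`-contracting, while `β^j` is not `D`-contracting for any `D < j/2` (the flat coset
`b`-`c`-plane through `b^j` projects onto a segment of `β^j` of length `j`). -/
theorem zFreeZsq_contracting (j : ℕ) (hj : 1 ≤ j) :
    IsGeodesicRayN αray ∧
    IsGeodesicRayN (βray j) ∧
    IsContractingRay 0 αray ∧
    ∀ D : ℝ, D < (j : ℝ) / 2 → ¬ IsContractingRay D (βray j) :=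
  ⟨geodesic_alpha, geodesic_beta j, alpha_contracting, fun D hD => beta_not_contracting j hj D hD⟩

end ZFreeZsq
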